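/- (Dimension theorem) The affine span of S has dimension n−1 if m₁ = m₂ = m₃, and dimension n otherwise. -/

import Mathlib

open Finset Module Submodule

theorem aux_vs_le {M : Type*} [AddCommGroup M] [Module ℝ M] (s : Set M) :
    vectorSpan ℝ s ≤ Submodule.span ℝ s := by
  rw [vectorSpan_def, Submodule.span_le]
  rintro x ⟨a, ha, b, hb, rfl⟩
  exact sub_mem (subset_span ha) (subset_span hb)

theorem aux_sumzero {M : Type*} [AddCommGroup M] [Module ℝ M]
    (S : Finset M) (s₀ : M) (hs₀ : s₀ ∈ S) (w : M → ℝ)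
    (hw : ∑ s ∈ S, w s = 0) :
    ∑ s ∈ S, w s • s ∈ vectorSpan ℝ (S : Set M) := by
  have h : ∑ s ∈ S, w s • s = ∑ s ∈ S, w s • (s - s₀) := by
    simp [smul_sub, Finset.sum_sub_distrib, ← Finset.sum_smul, hw]
  rw [h]
  refine Submodule.sum_mem _ fun s hs => Submodule.smul_mem _ _ ?_
  have := vsub_mem_vectorSpan ℝ (Finset.mem_coe.2 hs) (Finset.mem_coe.2 hs₀)
  simpa [vsub_eq_sub] using this

theorem aux_ind_sum {M : Type*} [DecidableEq M] (S A : Finset M) (hA : A ⊆ S) (c : ℝ) :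
    ∑ s ∈ S, (if s ∈ A then c else 0) = A.card * c := by
  rw [Finset.sum_ite_mem, Finset.inter_eq_right.2 hA]
  simp [mul_comm]

theorem aux_ind_smul {M : Type*} [DecidableEq M] [AddCommGroup M] [Module ℝ M]
    (S A : Finset M) (hA : A ⊆ S) (c : ℝ) :
    ∑ s ∈ S, (if s ∈ A then c else 0) • s = c • ∑ s ∈ A, s := by
  simp only [ite_smul, zero_smul]
  rw [Finset.sum_ite_mem, Finset.inter_eq_right.2 hA, Finset.smul_sum]

theorem aux_one_mem {N : ℕ} (S A B : Finset (Fin N → ℝ))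
    (hA : A ⊆ S) (hB : B ⊆ S)
    (hsA : ∑ v ∈ A, v = fun _ => (1:ℝ)) (hsB : ∑ v ∈ B, v = fun _ => (1:ℝ))
    (hcard : A.card ≠ B.card) (s₀ : Fin N → ℝ) (hs₀ : s₀ ∈ S) :
    (fun _ => (1:ℝ)) ∈ vectorSpan ℝ (S : Set (Fin N → ℝ)) := by
  classical
  set w : (Fin N → ℝ) → ℝ := fun s =>
    (if s ∈ A then (B.card : ℝ) else 0) - (if s ∈ B then (A.card : ℝ) else 0) with hw_def
  have hw : ∑ s ∈ S, w s = 0 := by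
    simp [hw_def, Finset.sum_sub_distrib, aux_ind_sum S A hA, aux_ind_sum S B hB, mul_comm]
  have hval : ∑ s ∈ S, w s • s = ((B.card : ℝ) - A.card) • (fun _ => (1:ℝ)) := by
    simp only [hw_def, sub_smul, Finset.sum_sub_distrib,
      aux_ind_smul S A hA, aux_ind_smul S B hB, hsA, hsB]
  have hmem := aux_sumzero S s₀ hs₀ w hw
  rw [hval] at hmem
  have hc : ((B.card : ℝ) - A.card) ≠ 0 := by
    intro hcc
    exact hcard (by exact_mod_cast (sub_eq_zero.1 hcc).symm)
  rwa [Submodule.smul_mem_iff _ hc] at hmem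

theorem aux_elem_mem {N : ℕ} (S A : Finset (Fin N → ℝ))
    (hA : A ⊆ S) (hAne : A.Nonempty)
    (hsA : ∑ v ∈ A, v = fun _ => (1:ℝ))
    (hone : (fun _ => (1:ℝ)) ∈ vectorSpan ℝ (S : Set (Fin N → ℝ)))
    (s₁ : Fin N → ℝ) (hs₁ : s₁ ∈ S) :
    s₁ ∈ vectorSpan ℝ (S : Set (Fin N → ℝ)) := by
  classical
  have hAc : (A.card : ℝ) ≠ 0 := by
    simpa using Finset.card_ne_zero_of_mem hAne.choose_spec
  set w : (Fin N → ℝ) → ℝ := fun s =>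
    (if s = s₁ then 1 else 0) - (A.card : ℝ)⁻¹ * (if s ∈ A then 1 else 0) with hw_def
  have hw : ∑ s ∈ S, w s = 0 := by
    simp [hw_def, Finset.sum_sub_distrib, ← Finset.mul_sum, aux_ind_sum S A hA,
      Finset.sum_ite_eq' S s₁, hs₁, mul_inv_cancel₀ hAc]
  have hval : ∑ s ∈ S, w s • s = s₁ - (A.card : ℝ)⁻¹ • (fun _ => (1:ℝ)) := by
    simp only [hw_def, sub_smul, Finset.sum_sub_distrib, mul_smul, ← Finset.smul_sum,
      aux_ind_smul S A hA, hsA, one_smul]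
    congr 1
    simp only [ite_smul, one_smul, zero_smul]
    rw [Finset.sum_ite_eq' S s₁]
    simp [hs₁]
  have hmem := aux_sumzero S s₁ hs₁ w hw
  rw [hval] at hmem
  have := Submodule.add_mem _ hmem (Submodule.smul_mem _ ((A.card : ℝ)⁻¹) hone)
  simpa using this
theorem aux_not_mem
    (n : ℕ)
    (S V1 V2 V3 : Finset (Fin (2 * n) → ℝ))
    (hScard : S.card = n + 2)
    (hV1 : V1 ⊆ S) (hV2 : V2 ⊆ S) (hV3 : V3 ⊆ S)
    (hd12 : Disjoint V1 V2) (hd13 : Disjoint V1 V3) (hd23 : Disjoint V2 V3)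
    (hne2 : V2.Nonempty) (hne3 : V3.Nonempty)
    (hsum1 : ∑ v ∈ V1, v = fun _ => (1 : ℝ))
    (hsum2 : ∑ v ∈ V2, v = fun _ => (1 : ℝ))
    (hsum3 : ∑ v ∈ V3, v = fun _ => (1 : ℝ))
    (hspan : Module.finrank ℝ (Submodule.span ℝ (S : Set (Fin (2 * n) → ℝ))) = n)
    (h12 : V1.card = V2.card) (h23 : V2.card = V3.card)
    (s₀ : Fin (2 * n) → ℝ) (hs₀ : s₀ ∈ S) :
    s₀ ∉ vectorSpan ℝ (S : Set (Fin (2 * n) → ℝ)) := by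
  classical
  set φ : (↥S → ℝ) →ₗ[ℝ] (Fin (2 * n) → ℝ) :=
    ∑ s : ↥S, (LinearMap.proj s).smulRight (s : Fin (2 * n) → ℝ) with hφdef
  have hφ : ∀ w : ↥S → ℝ, φ w = ∑ s : ↥S, w s • (s : Fin (2 * n) → ℝ) := by
    intro w
    simp [hφdef, LinearMap.sum_apply]
  set σ : (↥S → ℝ) →ₗ[ℝ] ℝ := ∑ s : ↥S, LinearMap.proj s with hσdef
  have hσ : ∀ w : ↥S → ℝ, σ w = ∑ s : ↥S, w s := by
    intro w; simp [hσdef, LinearMap.sum_apply]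
  -- range of φ is the span of S
  have hrange : LinearMap.range φ = Submodule.span ℝ (S : Set (Fin (2 * n) → ℝ)) := by
    apply le_antisymm
    · rintro x ⟨w, rfl⟩
      rw [hφ]
      exact Submodule.sum_mem _ fun s _ => Submodule.smul_mem _ _ (subset_span s.2)
    · rw [Submodule.span_le]
      intro s hs
      refine ⟨Pi.single (⟨s, hs⟩ : ↥S) 1, ?_⟩
      rw [hφ, Finset.sum_eq_single (⟨s, hs⟩ : ↥S)]
      · simp
      · intro t _ ht
        rw [Pi.single_eq_of_ne ht, zero_smul]
      · intro h; exact absurd (Finset.mem_univ _) h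
  have hker : Module.finrank ℝ (LinearMap.ker φ) = 2 := by
    have h1 := LinearMap.finrank_range_add_finrank_ker φ
    rw [hrange, hspan, Module.finrank_fintype_fun_eq_card, Fintype.card_coe, hScard] at h1
    omega
  -- the two relations
  set r₁ : ↥S → ℝ := fun s =>
    (if (s : Fin (2 * n) → ℝ) ∈ V1 then 1 else 0) -
    (if (s : Fin (2 * n) → ℝ) ∈ V2 then 1 else 0) with hr₁def
  set r₂ : ↥S → ℝ := fun s =>
    (if (s : Fin (2 * n) → ℝ) ∈ V2 then 1 else 0) -
    (if (s : Fin (2 * n) → ℝ) ∈ V3 then 1 else 0) with hr₂def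
  have hr₁ker : r₁ ∈ LinearMap.ker φ := by
    rw [LinearMap.mem_ker, hφ]
    rw [Finset.sum_coe_sort S (fun x => ((if x ∈ V1 then (1:ℝ) else 0) - (if x ∈ V2 then 1 else 0)) • x)]
    simp only [sub_smul, Finset.sum_sub_distrib, aux_ind_smul S V1 hV1,
      aux_ind_smul S V2 hV2, hsum1, hsum2, sub_self]
  have hr₂ker : r₂ ∈ LinearMap.ker φ := by
    rw [LinearMap.mem_ker, hφ]
    rw [Finset.sum_coe_sort S (fun x => ((if x ∈ V2 then (1:ℝ) else 0) - (if x ∈ V3 then 1 else 0)) • x)]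
    simp only [sub_smul, Finset.sum_sub_distrib, aux_ind_smul S V2 hV2,
      aux_ind_smul S V3 hV3, hsum2, hsum3, sub_self]
  have hr₁σ : σ r₁ = 0 := by
    rw [hσ]
    rw [Finset.sum_coe_sort S (fun x => ((if x ∈ V1 then (1:ℝ) else 0) - (if x ∈ V2 then 1 else 0)))]
    simp [Finset.sum_sub_distrib, aux_ind_sum S V1 hV1, aux_ind_sum S V2 hV2, h12]
  have hr₂σ : σ r₂ = 0 := by
    rw [hσ]
    rw [Finset.sum_coe_sort S (fun x => ((if x ∈ V2 then (1:ℝ) else 0) - (if x ∈ V3 then 1 else 0)))]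
    simp [Finset.sum_sub_distrib, aux_ind_sum S V2 hV2, aux_ind_sum S V3 hV3, h23]
  -- independence of the two relations
  obtain ⟨v₂, hv₂⟩ := hne2
  obtain ⟨v₃, hv₃⟩ := hne3
  have hv₂1 : v₂ ∉ V1 := Finset.disjoint_right.1 hd12 hv₂
  have hv₂3 : v₂ ∉ V3 := Finset.disjoint_left.1 hd23 hv₂
  have hv₃1 : v₃ ∉ V1 := Finset.disjoint_right.1 hd13 hv₃
  have hv₃2 : v₃ ∉ V2 := Finset.disjoint_right.1 hd23 hv₃
  have hli : LinearIndependent ℝ ![r₁, r₂] := by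
    rw [LinearIndependent.pair_iff]
    intro a b hab
    have h2 := congrFun hab ⟨v₂, hV2 hv₂⟩
    have h3 := congrFun hab ⟨v₃, hV3 hv₃⟩
    simp only [hr₁def, hr₂def, Pi.add_apply, Pi.smul_apply, smul_eq_mul, Pi.zero_apply] at h2 h3
    rw [if_neg hv₂1, if_pos hv₂, if_neg hv₂3] at h2
    rw [if_neg hv₃1, if_neg hv₃2, if_pos hv₃] at h3
    constructor <;> linarith
  have hsp2 : Module.finrank ℝ (Submodule.span ℝ (Set.range ![r₁, r₂])) = 2 := by
    rw [finrank_span_eq_card hli]; simp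
  -- kernel of φ is contained in kernel of σ
  have hle2 : Submodule.span ℝ (Set.range ![r₁, r₂]) ≤ LinearMap.ker φ ⊓ LinearMap.ker σ := by
    rw [Submodule.span_le, Set.range_subset_iff]
    intro i
    fin_cases i
    · exact Submodule.mem_inf.2 ⟨hr₁ker, LinearMap.mem_ker.2 hr₁σ⟩
    · exact Submodule.mem_inf.2 ⟨hr₂ker, LinearMap.mem_ker.2 hr₂σ⟩
  have hK2 : LinearMap.ker φ ⊓ LinearMap.ker σ = LinearMap.ker φ := by
    apply Submodule.eq_of_le_of_finrank_le inf_le_left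
    have hfm := Submodule.finrank_mono hle2
    rw [hsp2] at hfm
    rw [hker]
    exact hfm
  have hkerle : LinearMap.ker φ ≤ LinearMap.ker σ := hK2 ▸ inf_le_right
  -- now suppose s₀ is in the vector span
  intro hmem
  rw [vectorSpan_eq_span_vsub_set_right ℝ (Finset.mem_coe.2 hs₀)] at hmem
  have himg : ((· -ᵥ s₀) '' (S : Set (Fin (2 * n) → ℝ))) = ↑(S.image (· - s₀)) := by
    simp [Finset.coe_image, vsub_eq_sub]
  rw [himg, mem_span_finset] at hmem
  obtain ⟨f, hf⟩ := hmem
  rw [Finset.sum_image (fun a _ b _ h => by simpa using sub_left_injective h)] at hf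
  set g : (Fin (2 * n) → ℝ) → ℝ := fun s => f (s - s₀) with hgdef
  set c : ℝ := ∑ s ∈ S, g s with hcdef
  have h1 : ∑ s ∈ S, g s • s = s₀ + c • s₀ := by
    have he : ∑ s ∈ S, g s • (s - s₀) = ∑ s ∈ S, g s • s - c • s₀ := by
      simp [smul_sub, Finset.sum_sub_distrib, ← Finset.sum_smul, hcdef]
    rw [he] at hf
    exact sub_eq_iff_eq_add.1 hf.2
  set w : ↥S → ℝ := fun s => g s - (if (s : Fin (2 * n) → ℝ) = s₀ then c + 1 else 0) with hwdef
  have hwker : w ∈ LinearMap.ker φ := by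
    rw [LinearMap.mem_ker, hφ]
    rw [Finset.sum_coe_sort S (fun x => (g x - if x = s₀ then c + 1 else 0) • x)]
    simp only [sub_smul, Finset.sum_sub_distrib, h1, ite_smul, zero_smul]
    rw [Finset.sum_ite_eq' S s₀ (fun x => (c + 1) • x), if_pos hs₀, add_smul, one_smul]
    abel
  have hσw := hkerle hwker
  rw [LinearMap.mem_ker, hσ] at hσw
  rw [Finset.sum_coe_sort S (fun x => (g x - if x = s₀ then c + 1 else 0))] at hσw
  rw [Finset.sum_sub_distrib, Finset.sum_ite_eq' S s₀ (fun _ => c + 1), if_pos hs₀, ← hcdef] at hσw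
  simp at hσw

theorem stmt_1
    (n : ℕ) (hn : 0 < n)
    (S V1 V2 V3 : Finset (Fin (2 * n) → ℝ))
    (h01 : ∀ v ∈ S, ∀ i, v i = 0 ∨ v i = 1)
    (hScard : S.card = n + 2)
    (hunion : V1 ∪ V2 ∪ V3 = S)
    (hd12 : Disjoint V1 V2) (hd13 : Disjoint V1 V3) (hd23 : Disjoint V2 V3)
    (hne1 : V1.Nonempty) (hne2 : V2.Nonempty) (hne3 : V3.Nonempty)
    (hsum1 : ∑ v ∈ V1, v = fun _ => (1 : ℝ))
    (hsum2 : ∑ v ∈ V2, v = fun _ => (1 : ℝ))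
    (hsum3 : ∑ v ∈ V3, v = fun _ => (1 : ℝ))
    (hspan : Module.finrank ℝ (Submodule.span ℝ (S : Set (Fin (2 * n) → ℝ))) = n)
    : Module.finrank ℝ (affineSpan ℝ (S : Set (Fin (2 * n) → ℝ))).direction = if V1.card = V2.card ∧ V2.card = V3.card then n - 1 else n := by
  classical
  have hV1S : V1 ⊆ S := fun x hx => hunion ▸ Finset.mem_union_left _ (Finset.mem_union_left _ hx)
  have hV2S : V2 ⊆ S := fun x hx => hunion ▸ Finset.mem_union_left _ (Finset.mem_union_right _ hx)
  have hV3S : V3 ⊆ S := fun x hx => hunion ▸ Finset.mem_union_right _ hx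
  obtain ⟨s₀, hs₀V1⟩ := hne1
  have hs₀ : s₀ ∈ S := hV1S hs₀V1
  rw [direction_affineSpan]
  by_cases h : V1.card = V2.card ∧ V2.card = V3.card
  · rw [if_pos h]
    have hnm := aux_not_mem n S V1 V2 V3 hScard hV1S hV2S hV3S hd12 hd13 hd23 hne2 hne3
      hsum1 hsum2 hsum3 hspan h.1 h.2 s₀ hs₀
    have hs0ne : s₀ ≠ 0 := fun hz => hnm (hz ▸ (vectorSpan ℝ (S : Set (Fin (2 * n) → ℝ))).zero_mem)
    have hsup : Submodule.span ℝ (S : Set (Fin (2 * n) → ℝ)) =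
        vectorSpan ℝ (S : Set (Fin (2 * n) → ℝ)) ⊔ (ℝ ∙ s₀) := by
      apply le_antisymm
      · rw [Submodule.span_le]
        intro s hs
        have h1 : s - s₀ ∈ vectorSpan ℝ (S : Set (Fin (2 * n) → ℝ)) := by
          have := vsub_mem_vectorSpan ℝ hs (Finset.mem_coe.2 hs₀)
          simpa [vsub_eq_sub] using this
        exact (sub_add_cancel s s₀) ▸ Submodule.add_mem _ (Submodule.mem_sup_left h1)
          (Submodule.mem_sup_right (Submodule.mem_span_singleton_self s₀))
      · exact sup_le (aux_vs_le _)
          (Submodule.span_mono (Set.singleton_subset_iff.2 (Finset.mem_coe.2 hs₀)))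
    have hinf : vectorSpan ℝ (S : Set (Fin (2 * n) → ℝ)) ⊓ (ℝ ∙ s₀) = ⊥ := by
      rw [eq_bot_iff]
      rintro x hx
      obtain ⟨hxW, hxs⟩ := Submodule.mem_inf.1 hx
      obtain ⟨cc, rfl⟩ := Submodule.mem_span_singleton.1 hxs
      rcases eq_or_ne cc 0 with hc | hc
      · simp [hc]
      · exfalso
        apply hnm
        have := Submodule.smul_mem _ cc⁻¹ hxW
        rwa [smul_smul, inv_mul_cancel₀ hc, one_smul] at this
    have hfr := Submodule.finrank_sup_add_finrank_inf_eq
      (vectorSpan ℝ (S : Set (Fin (2 * n) → ℝ))) (ℝ ∙ s₀)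
    rw [hinf, finrank_bot, finrank_span_singleton hs0ne] at hfr
    rw [hsup] at hspan
    omega
  · rw [if_neg h]
    have hone : (fun _ => (1 : ℝ)) ∈ vectorSpan ℝ (S : Set (Fin (2 * n) → ℝ)) := by
      by_cases h12 : V1.card = V2.card
      · exact aux_one_mem S V2 V3 hV2S hV3S hsum2 hsum3 (fun hh => h ⟨h12, hh⟩) s₀ hs₀
      · exact aux_one_mem S V1 V2 hV1S hV2S hsum1 hsum2 h12 s₀ hs₀
    have heq : Submodule.span ℝ (S : Set (Fin (2 * n) → ℝ)) =
        vectorSpan ℝ (S : Set (Fin (2 * n) → ℝ)) := by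
      apply le_antisymm
      · rw [Submodule.span_le]
        intro s hs
        exact SetLike.mem_coe.2
          (aux_elem_mem S V1 hV1S ⟨s₀, hs₀V1⟩ hsum1 hone s (Finset.mem_coe.1 hs))
      · exact aux_vs_le _
    rw [← heq]
    exact hspan
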